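/- For i.i.d. continuous observations and integers 1 ≤ r ≤ t ≤ n and k ≥ 1, the conditional factorial moment of the absolute rank satisfies E[A_{t,n}(A_{t,n}+1)⋯(A_{t,n}+k−1) | R_t = r] = [(n+1)(n+2)⋯(n+k) / ((t+1)(t+2)⋯(t+k))] · r(r+1)⋯(r+k−1). -/

import Mathlib

open MeasureTheory ProbabilityTheory Finset
open scoped ENNReal Classical

noncomputable section

/-- The σ-algebra on `Ω` generated by the functions `f 1, …, f t`. -/
def genFilt {Ω β : Type*} [MeasurableSpace β] (f : ℕ → Ω → β) (t : ℕ) :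
    MeasurableSpace Ω :=
  ⨆ i ∈ Set.Icc 1 t, MeasurableSpace.comap (f i) inferInstance

/-- `τ` is a stopping time with values in `{1,…,n}` of the filtration generated by `f`. -/
def IsStopTime {Ω β : Type*} [MeasurableSpace β] (f : ℕ → Ω → β) (n : ℕ) (τ : Ω → ℕ) : Prop :=
  (∀ ω, τ ω ∈ Set.Icc 1 n) ∧ ∀ t, MeasurableSet[genFilt f t] {ω | τ ω = t}

/-- The family `(f i)_{i ∈ s}` is independent under `μ`. -/
def IndepSeq {Ω β : Type*} [MeasurableSpace Ω] [MeasurableSpace β]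
    (f : ℕ → Ω → β) (s : Set ℕ) (μ : Measure Ω) : Prop :=
  iIndepFun (β := fun _ : s => β) (fun i : s => f i.1) μ

/-- `N` is independent of the family `(f i)_{i ∈ s}`. -/
def IndepOfSeq {Ω β : Type*} [MeasurableSpace Ω] [MeasurableSpace β]
    (N : Ω → ℕ) (f : ℕ → Ω → β) (s : Set ℕ) (μ : Measure Ω) : Prop :=
  IndepFun N (fun ω (i : s) => f i.1 ω) μ

/-- The absolute rank `A_{t,k}` of `X t` among `X 1, …, X k`
(the largest observation has rank 1). -/
def absRank {Ω : Type*} (X : ℕ → Ω → ℝ) (t k : ℕ) (ω : Ω) : ℕ :=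
  ((Finset.Icc 1 k).filter fun j => X t ω ≤ X j ω).card

/-- The relative rank `R_t = A_{t,t}`. -/
def relRank {Ω : Type*} (X : ℕ → Ω → ℝ) (t : ℕ) (ω : Ω) : ℕ := absRank X t t ω

/-- `(X i)_{i ∈ s}` are i.i.d. with an atomless (continuous) common distribution. -/
def IIDContinuousOn {Ω : Type*} [MeasurableSpace Ω] (X : ℕ → Ω → ℝ) (s : Set ℕ)
    (μ : Measure Ω) : Prop :=
  (∀ i ∈ s, Measurable (X i)) ∧ IndepSeq X s μ ∧
  (∀ i ∈ s, ∀ j ∈ s, IdentDistrib (X i) (X j) μ μ) ∧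
  (∀ i ∈ s, ∀ x : ℝ, μ {ω | X i ω = x} = 0)

namespace Stmt13Aux


/-- count of coordinates `j < m'` with `x q ≤ x j`. -/
def cnt {N : ℕ} (q : Fin N) (m' : ℕ) (x : Fin N → ℝ) : ℕ :=
  (Finset.univ.filter fun j : Fin N => (j : ℕ) < m' ∧ x q ≤ x j).card

def vperm {N : ℕ} (σ : Equiv.Perm (Fin N)) : Fin N → ℝ := fun i => ((σ i : ℕ) : ℝ)

lemma cnt_congr {N : ℕ} (q : Fin N) (m' : ℕ) {x y : Fin N → ℝ}
    (h : ∀ i j, x i ≤ x j ↔ y i ≤ y j) : cnt q m' x = cnt q m' y := by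
  unfold cnt
  congr 1
  apply Finset.filter_congr
  intro j _
  rw [h]

lemma cnt_vperm {N : ℕ} (q : Fin N) (m' : ℕ) (σ : Equiv.Perm (Fin N)) :
    cnt q m' (vperm σ)
      = (Finset.univ.filter fun j : Fin N => (j : ℕ) < m' ∧ σ q ≤ σ j).card := by
  unfold cnt vperm
  congr 1
  apply Finset.filter_congr
  intro j _
  refine and_congr_right fun _ => ?_
  rw [Nat.cast_le]
  exact Iff.rfl

lemma cnt_le {N : ℕ} (q : Fin N) (m' : ℕ) (x : Fin N → ℝ) : cnt q m' x ≤ N := by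
  classical
  calc cnt q m' x ≤ (Finset.univ : Finset (Fin N)).card := Finset.card_filter_le _ _
  _ = N := by simp

lemma measurable_cnt {N : ℕ} (q : Fin N) (m' : ℕ) :
    Measurable (fun x : Fin N → ℝ => cnt q m' x) := by
  unfold cnt
  simp_rw [Finset.card_filter]
  refine Finset.measurable_sum _ fun j _ => ?_
  by_cases h : (j : ℕ) < m'
  · simp only [h, true_and]
    exact Measurable.ite
      (measurableSet_le (measurable_pi_apply q) (measurable_pi_apply j))
      measurable_const measurable_const
  · simp only [h, false_and, if_false]
    exact measurable_const

lemma absRank_eq_cnt {Ω : Type*} (X : ℕ → Ω → ℝ) (t m' N : ℕ)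
    (hm' : m' ≤ N) (ht : 1 ≤ t) (htm : t ≤ N) (ω : Ω) :
    absRank X t m' ω = cnt (⟨t - 1, by omega⟩ : Fin N) m' (fun i => X ((i : ℕ) + 1) ω) := by
  unfold absRank cnt
  have hXt : X (t - 1 + 1) ω = X t ω := by congr 1; omega
  refine Finset.card_bij' (fun j hj => (⟨j - 1, by
      simp only [Finset.mem_filter, Finset.mem_Icc] at hj; omega⟩ : Fin N))
    (fun j hj => (j : ℕ) + 1) ?_ ?_ ?_ ?_
  · intro j hj
    simp only [Finset.mem_filter, Finset.mem_Icc] at hj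
    simp only [Finset.mem_filter, Finset.mem_univ, true_and]
    constructor
    · omega
    · rw [hXt]
      have : j - 1 + 1 = j := by omega
      rw [this]
      exact hj.2
  · intro j hj
    simp only [Finset.mem_filter, Finset.mem_univ, true_and] at hj
    simp only [Finset.mem_filter, Finset.mem_Icc]
    refine ⟨⟨by omega, by omega⟩, ?_⟩
    rw [hXt] at hj
    exact hj.2
  · intro j hj
    simp only [Finset.mem_filter, Finset.mem_Icc] at hj
    dsimp only
    omega
  · intro j hj
    apply Fin.ext
    simp


variable {Ω : Type*} [MeasurableSpace Ω] (μ : Measure Ω) [IsProbabilityMeasure μ]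

theorem transfer (n : ℕ) (X : ℕ → Ω → ℝ) (hX : IIDContinuousOn X (Set.Icc 1 n) μ)
    (N : ℕ) (hN1 : 1 ≤ N) (hNn : N ≤ n)
    (F : (Fin N → ℝ) → ℝ) (hFm : Measurable F) (C : ℝ) (hC : ∀ x, |F x| ≤ C)
    (hF : ∀ x y : Fin N → ℝ, (∀ i j, x i ≤ x j ↔ y i ≤ y j) → F x = F y) :
    ∫ ω, F (fun i => X ((i : ℕ) + 1) ω) ∂μ
      = (N.factorial : ℝ)⁻¹ * ∑ σ : Equiv.Perm (Fin N), F (vperm σ) := by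
  obtain ⟨hmeas, hindep, hident, hatom⟩ := hX
  have hmX : ∀ i, 1 ≤ i → i ≤ n → Measurable (X i) := fun i h1 h2 => hmeas i ⟨h1, h2⟩
  set p : Measure ℝ := μ.map (X 1) with hp
  have h1n : (1 : ℕ) ≤ n := hN1.trans hNn
  have hX1 : Measurable (X 1) := hmX 1 le_rfl h1n
  haveI hpprob : IsProbabilityMeasure p := Measure.isProbabilityMeasure_map hX1.aemeasurable
  set Y : Ω → (Fin N → ℝ) := fun ω i => X ((i : ℕ) + 1) ω with hYdef
  have hY : Measurable Y :=
    measurable_pi_lambda _ fun i => hmX _ (by omega) (by omega)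
  -- identically distributed marginals
  have hmarg : ∀ i : Fin N, μ.map (X ((i : ℕ) + 1)) = p := by
    intro i
    have : IdentDistrib (X ((i : ℕ) + 1)) (X 1) μ μ :=
      hident _ ⟨by omega, by omega⟩ 1 ⟨le_rfl, h1n⟩
    exact this.map_eq
  -- the law of Y is the product measure
  have hmap : μ.map Y = Measure.pi (fun _ : Fin N => p) := by
    refine (Measure.pi_eq (μ := fun _ : Fin N => p) fun s hs => ?_).symm
    rw [Measure.map_apply hY (MeasurableSet.univ_pi hs)]
    have hpre : Y ⁻¹' Set.pi Set.univ s = ⋂ i : Fin N, X ((i : ℕ) + 1) ⁻¹' s i := by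
      ext ω; simp [Y, Set.mem_pi]
    rw [hpre]
    -- independence
    set e : Fin N → ↥(Set.Icc 1 n) := fun i => ⟨(i : ℕ) + 1, by
      constructor <;> [omega; (have := i.2; omega)]⟩ with he
    have heinj : Function.Injective e := by
      intro a b hab
      apply Fin.ext
      have := congrArg (fun z : ↥(Set.Icc 1 n) => (z : ℕ)) hab
      simpa [e] using this
    set g : ↥(Set.Icc 1 n) → Fin N := fun a => if h : (a : ℕ) - 1 < N then ⟨(a : ℕ) - 1, h⟩
      else ⟨0, hN1⟩ with hg
    have hge : ∀ i : Fin N, g (e i) = i := by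
      intro i
      have hi : ((i : ℕ) + 1) - 1 < N := by simpa using i.2
      simp only [g, e]
      rw [dif_pos hi]
      apply Fin.ext; simp
    set sets : ↥(Set.Icc 1 n) → Set ℝ := fun a => s (g a) with hsets
    have := hindep.measure_inter_preimage_eq_mul (S := Finset.univ.image e) (sets := sets)
      (fun a _ => hs (g a))
    have hiInter : (⋂ a ∈ Finset.univ.image e, X (a : ℕ) ⁻¹' sets a)
        = ⋂ i : Fin N, X ((i : ℕ) + 1) ⁻¹' s i := by
      ext ω
      simp only [Set.mem_iInter, Finset.mem_image, Finset.mem_univ, true_and]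
      constructor
      · intro h i
        have := h (e i) ⟨i, rfl⟩
        simpa [sets, hge i, e] using this
      · rintro h a ⟨i, rfl⟩
        simpa [sets, hge i, e] using h i
    rw [hiInter] at this
    rw [this, Finset.prod_image (fun a _ b _ hab => heinj hab)]
    refine Finset.prod_congr rfl fun i _ => ?_
    have hii : μ (X ((i : ℕ) + 1) ⁻¹' s i) = (μ.map (X ((i : ℕ) + 1))) (s i) := by
      rw [Measure.map_apply (hmX _ (by omega) (by have := i.2; omega)) (hs i)]
    have h2 : sets (e i) = s i := by show s (g (e i)) = s i; rw [hge i]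
    show μ (X ((i : ℕ) + 1) ⁻¹' sets (e i)) = p (s i)
    rw [h2, hii, hmarg i]
  -- permutation invariance of the product measure
  have hperm : ∀ e : Equiv.Perm (Fin N),
      Measure.map (fun x : Fin N → ℝ => x ∘ e) (Measure.pi fun _ : Fin N => p)
        = Measure.pi (fun _ : Fin N => p) := by
    intro e
    have hce : Measurable (fun x : Fin N → ℝ => x ∘ e) :=
      measurable_pi_lambda _ fun j => measurable_pi_apply (e j)
    refine (Measure.pi_eq (μ := fun _ : Fin N => p) fun s hs => ?_).symm
    rw [Measure.map_apply hce (MeasurableSet.univ_pi hs)]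
    have hpre : (fun x : Fin N → ℝ => x ∘ e) ⁻¹' Set.pi Set.univ s
        = Set.pi Set.univ fun i => s (e.symm i) := by
      ext x
      simp only [Set.mem_preimage, Set.mem_pi, Set.mem_univ, true_implies, Function.comp]
      constructor
      · intro h j
        have := h (e.symm j)
        simpa using this
      · intro h i
        simpa using h (e i)
    rw [hpre, Measure.pi_pi]
    simpa using (Equiv.prod_comp e.symm fun j => p (s j))
  -- almost surely injective
  have hpairμ : ∀ i j : Fin N, i ≠ j →
      μ {ω | X ((i : ℕ) + 1) ω = X ((j : ℕ) + 1) ω} = 0 := by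
    intro i j hij
    have hi : ((i : ℕ) + 1) ∈ Set.Icc 1 n := ⟨by omega, by have := i.2; omega⟩
    have hj : ((j : ℕ) + 1) ∈ Set.Icc 1 n := ⟨by omega, by have := j.2; omega⟩
    have hne : (⟨(i : ℕ) + 1, hi⟩ : ↥(Set.Icc 1 n)) ≠ ⟨(j : ℕ) + 1, hj⟩ := by
      intro h
      apply hij
      apply Fin.ext
      have := congrArg (fun z : ↥(Set.Icc 1 n) => (z : ℕ)) h
      simpa using this
    have hIF : IndepFun (X ((i : ℕ) + 1)) (X ((j : ℕ) + 1)) μ :=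
      hindep.indepFun hne
    have hmi : Measurable (X ((i : ℕ) + 1)) := hmX _ (by omega) (by have := i.2; omega)
    have hmj : Measurable (X ((j : ℕ) + 1)) := hmX _ (by omega) (by have := j.2; omega)
    have hprod := (indepFun_iff_map_prod_eq_prod_map_map hmi.aemeasurable
      hmj.aemeasurable).mp hIF
    have hdiag : MeasurableSet {q : ℝ × ℝ | q.1 = q.2} :=
      measurableSet_eq_fun measurable_fst measurable_snd
    have hset : {ω | X ((i : ℕ) + 1) ω = X ((j : ℕ) + 1) ω}
        = (fun ω => (X ((i : ℕ) + 1) ω, X ((j : ℕ) + 1) ω)) ⁻¹' {q : ℝ × ℝ | q.1 = q.2} := rfl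
    rw [hset, ← Measure.map_apply (hmi.prodMk hmj) hdiag, hprod,
      Measure.prod_apply hdiag]
    have : ∀ x : ℝ, (μ.map (X ((j : ℕ) + 1))) (Prod.mk x ⁻¹' {q : ℝ × ℝ | q.1 = q.2}) = 0 := by
      intro x
      have hpre2 : (Prod.mk x ⁻¹' {q : ℝ × ℝ | q.1 = q.2}) = {x} := by
        ext y; simp [eq_comm]
      rw [hpre2, hmarg j]
      have : p {x} = μ {ω | X 1 ω = x} := by
        rw [hp, Measure.map_apply hX1 (measurableSet_singleton x)]
        rfl
      rw [this]
      exact hatom 1 ⟨le_rfl, h1n⟩ x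
    simp only [this]
    simp
  have haeinj : ∀ᵐ x ∂(Measure.pi fun _ : Fin N => p), Function.Injective x := by
    rw [← hmap]
    have hsub : {x : Fin N → ℝ | ¬ Function.Injective x}
        ⊆ ⋃ q : Fin N × Fin N, {x : Fin N → ℝ | q.1 ≠ q.2 ∧ x q.1 = x q.2} := by
      intro x hx
      simp only [Set.mem_setOf_eq, Function.Injective, not_forall] at hx
      obtain ⟨i, j, hxij, hij⟩ := hx
      exact Set.mem_iUnion.mpr ⟨(i, j), hij, hxij⟩
    have hle := (measure_mono (μ := μ.map Y) hsub).trans (measure_iUnion_le _)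
    have hzero : ∀ q : Fin N × Fin N,
        (μ.map Y) {x : Fin N → ℝ | q.1 ≠ q.2 ∧ x q.1 = x q.2} = 0 := by
      rintro ⟨i, j⟩
      by_cases hij : i = j
      · simp [hij]
      · have hsetm : MeasurableSet {x : Fin N → ℝ | x i = x j} :=
          measurableSet_eq_fun (measurable_pi_apply i) (measurable_pi_apply j)
        have : {x : Fin N → ℝ | i ≠ j ∧ x i = x j} = {x : Fin N → ℝ | x i = x j} := by
          ext x; simp [hij]
        rw [this, Measure.map_apply hY hsetm]
        exact hpairμ i j hij
      
    have : ∀ᵐ x ∂(μ.map Y), Function.Injective x := by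
      rw [ae_iff]
      refine le_antisymm ?_ zero_le
      refine hle.trans ?_
      simp only [hzero]
      simp
    exact this
  -- pointwise symmetrization identity
  have hpoint : ∀ x : Fin N → ℝ, Function.Injective x →
      ∑ e : Equiv.Perm (Fin N), F (x ∘ e) = ∑ σ : Equiv.Perm (Fin N), F (vperm σ) := by
    intro x hx
    set s := Tuple.sort x with hs
    have hmono : Monotone (x ∘ s) := Tuple.monotone_sort x
    have hsm : StrictMono (x ∘ s) := hmono.strictMono_of_injective (hx.comp s.injective)
    have hcmp : ∀ i j : Fin N, x i ≤ x j ↔ s.symm i ≤ s.symm j := by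
      intro i j
      have h1 : x i = (x ∘ s) (s.symm i) := by simp
      have h2 : x j = (x ∘ s) (s.symm j) := by simp
      rw [h1, h2]
      exact hsm.le_iff_le
    refine Fintype.sum_bijective (fun e : Equiv.Perm (Fin N) => e.trans s.symm)
      ?_ _ _ ?_
    · constructor
      · intro a b hab
        have := congrArg (fun c : Equiv.Perm (Fin N) => c.trans (s.symm.symm)) hab
        simpa [Equiv.trans_assoc] using this
      · intro b
        exact ⟨b.trans s.symm.symm, by simp [Equiv.trans_assoc]⟩
    · intro e
      refine hF _ _ ?_
      intro i j
      show x (e i) ≤ x (e j) ↔ _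
      rw [hcmp]
      unfold vperm
      rw [Nat.cast_le]
      exact Iff.rfl
  -- integrability
  have hcomp_meas : ∀ e : Equiv.Perm (Fin N),
      Measurable fun x : Fin N → ℝ => F (x ∘ e) := by
    intro e
    exact hFm.comp (measurable_pi_lambda _ fun j => measurable_pi_apply (e j))
  have hint : ∀ e : Equiv.Perm (Fin N),
      Integrable (fun x : Fin N → ℝ => F (x ∘ e)) (Measure.pi fun _ : Fin N => p) := by
    intro e
    refine Integrable.mono' (integrable_const C) (hcomp_meas e).aestronglyMeasurable ?_
    exact Filter.Eventually.of_forall fun x => hC _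
  -- main computation
  have hmain : ∫ ω, F (Y ω) ∂μ = ∫ x, F x ∂(Measure.pi fun _ : Fin N => p) := by
    rw [← hmap, integral_map hY.aemeasurable hFm.aestronglyMeasurable]
  have hkey : ∀ e : Equiv.Perm (Fin N),
      ∫ x, F x ∂(Measure.pi fun _ : Fin N => p)
        = ∫ x, F (x ∘ e) ∂(Measure.pi fun _ : Fin N => p) := by
    intro e
    conv_lhs => rw [← hperm e]
    exact integral_map (measurable_pi_lambda _ fun j =>
      measurable_pi_apply (e j)).aemeasurable hFm.aestronglyMeasurable
  have hsum : (N.factorial : ℝ) * ∫ x, F x ∂(Measure.pi fun _ : Fin N => p)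
      = ∑ σ : Equiv.Perm (Fin N), F (vperm σ) := by
    have h1 : (N.factorial : ℝ) * ∫ x, F x ∂(Measure.pi fun _ : Fin N => p)
        = ∑ e : Equiv.Perm (Fin N), ∫ x, F (x ∘ e) ∂(Measure.pi fun _ : Fin N => p) := by
      rw [Finset.sum_congr rfl fun e _ => (hkey e).symm]
      rw [Finset.sum_const, Finset.card_univ, Fintype.card_perm, Fintype.card_fin]
      simp [nsmul_eq_mul]
    rw [h1, ← integral_finset_sum _ fun e _ => hint e]
    have h2 : ∫ x, ∑ e : Equiv.Perm (Fin N), F (x ∘ e) ∂(Measure.pi fun _ : Fin N => p)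
        = ∫ _x, (∑ σ : Equiv.Perm (Fin N), F (vperm σ)) ∂(Measure.pi fun _ : Fin N => p) := by
      refine integral_congr_ae ?_
      filter_upwards [haeinj] with x hx
      exact hpoint x hx
    rw [h2, integral_const]
    simp
  have hfac : (N.factorial : ℝ) ≠ 0 := Nat.cast_ne_zero.mpr (Nat.factorial_ne_zero N)
  rw [show (fun ω => F fun i => X ((i : ℕ) + 1) ω) = fun ω => F (Y ω) from rfl]
  rw [hmain, ← hsum]
  field_simp

variable {m : ℕ}

def insFun (τ : Equiv.Perm (Fin m)) (c : Fin (m + 1)) : Fin (m + 1) → Fin (m + 1) :=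
  fun i => if h : (i : ℕ) < m then c.succAbove (τ ⟨(i : ℕ), h⟩) else c

lemma insFun_injective (τ : Equiv.Perm (Fin m)) (c : Fin (m + 1)) :
    Function.Injective (insFun τ c) := by
  intro i j hij
  unfold insFun at hij
  split_ifs at hij with hi hj hj
  · have h1 := Fin.succAbove_right_injective (p := c) hij
    have h2 := τ.injective h1
    have := congrArg Fin.val h2
    simp only [Fin.val_mk] at this
    exact Fin.ext this
  · exact absurd hij (Fin.succAbove_ne c _)
  · exact absurd hij.symm (Fin.succAbove_ne c _)
  · apply Fin.ext
    have hi2 := i.2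
    have hj2 := j.2
    omega

def insPerm (τ : Equiv.Perm (Fin m)) (c : Fin (m + 1)) : Equiv.Perm (Fin (m + 1)) :=
  Equiv.ofBijective _ ((Finite.injective_iff_bijective).mp (insFun_injective τ c))

lemma insPerm_apply (τ : Equiv.Perm (Fin m)) (c : Fin (m + 1)) (i : Fin (m + 1)) :
    insPerm τ c i = insFun τ c i := rfl

lemma insPerm_apply_lt (τ : Equiv.Perm (Fin m)) (c : Fin (m + 1)) (i : Fin (m + 1))
    (h : (i : ℕ) < m) : insPerm τ c i = c.succAbove (τ ⟨(i : ℕ), h⟩) := by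
  rw [insPerm_apply]; unfold insFun; rw [dif_pos h]

lemma insPerm_apply_last (τ : Equiv.Perm (Fin m)) (c : Fin (m + 1)) :
    insPerm τ c (Fin.last m) = c := by
  rw [insPerm_apply]; unfold insFun
  rw [dif_neg (by simp)]

def Φ : Equiv.Perm (Fin m) × Fin (m + 1) → Equiv.Perm (Fin (m + 1)) :=
  fun q => insPerm q.1 q.2

lemma Φ_bijective : Function.Bijective (Φ (m := m)) := by
  rw [Fintype.bijective_iff_injective_and_card]
  constructor
  · rintro ⟨τ, c⟩ ⟨τ', c'⟩ h
    have hc : c = c' := by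
      have := congrArg (fun e : Equiv.Perm (Fin (m + 1)) => e (Fin.last m)) h
      simpa [Φ, insPerm_apply_last] using this
    subst hc
    have hτ : τ = τ' := by
      apply Equiv.ext
      intro i
      have hi : ((Fin.castSucc i : Fin (m + 1)) : ℕ) < m := by simp [i.2]
      have := congrArg (fun e : Equiv.Perm (Fin (m + 1)) => e (Fin.castSucc i)) h
      simp only [Φ, insPerm_apply_lt _ _ _ hi] at this
      have h2 := Fin.succAbove_right_injective (p := c) this
      have : τ ⟨(i : ℕ), i.2⟩ = τ' ⟨(i : ℕ), i.2⟩ := by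
        convert h2 using 2 <;> simp
      simpa using this
    rw [hτ]
  · simp [Fintype.card_perm, Fintype.card_fin, Nat.factorial_succ, mul_comm]

lemma succAbove_le_self_iff (c : Fin (m + 1)) (i : Fin m) :
    c.succAbove i ≤ c ↔ (i : ℕ) < (c : ℕ) := by
  constructor
  · intro h
    have hne : c.succAbove i ≠ c := Fin.succAbove_ne c i
    have hlt : c.succAbove i < c := lt_of_le_of_ne h hne
    rw [Fin.succAbove_lt_iff_castSucc_lt] at hlt
    simpa [Fin.lt_def] using hlt
  · intro h
    have hlt : Fin.castSucc i < c := by simpa [Fin.lt_def] using h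
    rw [Fin.succAbove_of_castSucc_lt _ _ hlt]
    exact le_of_lt hlt

lemma count_ge (τ : Equiv.Perm (Fin m)) (q : Fin m) :
    (Finset.univ.filter fun j : Fin m => τ q ≤ τ j).card = m - (τ q : ℕ) := by
  have h1 : (Finset.univ.filter fun j : Fin m => τ q ≤ τ j)
      = (Finset.univ.filter fun j : Fin m => τ q ≤ j).image τ.symm := by
    ext j
    simp only [Finset.mem_filter, Finset.mem_univ, true_and, Finset.mem_image]
    constructor
    · intro h
      exact ⟨τ j, h, by simp⟩
    · rintro ⟨b, hb, rfl⟩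
      simpa using hb
  rw [h1, Finset.card_image_of_injective _ τ.symm.injective]
  have h2 : (Finset.univ.filter fun j : Fin m => τ q ≤ j) = Finset.Ici (τ q) := by
    ext j; simp [Finset.mem_Ici]
  rw [h2, Fin.card_Ici]

lemma cnt_full (τ : Equiv.Perm (Fin m)) (q : Fin m) :
    cnt q m (vperm τ) = m - (τ q : ℕ) := by
  rw [cnt_vperm]
  rw [show (Finset.univ.filter fun j : Fin m => (j : ℕ) < m ∧ τ q ≤ τ j)
      = (Finset.univ.filter fun j : Fin m => τ q ≤ τ j) from by
    apply Finset.filter_congr; intro j _; simp [j.2]]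
  exact count_ge τ q


lemma cnt_insPerm_le (τ : Equiv.Perm (Fin m)) (c : Fin (m + 1)) (m' : ℕ) (hm' : m' ≤ m)
    (q : Fin (m + 1)) (hq : (q : ℕ) < m) :
    cnt q m' (vperm (insPerm τ c)) = cnt (⟨(q : ℕ), hq⟩ : Fin m) m' (vperm τ) := by
  rw [cnt_vperm, cnt_vperm]
  refine Finset.card_bij' (fun j hj => (⟨(j : ℕ), by
      simp only [Finset.mem_filter] at hj; omega⟩ : Fin m))
    (fun j hj => (Fin.castSucc j : Fin (m + 1))) ?_ ?_ ?_ ?_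
  · intro j hj
    simp only [Finset.mem_filter, Finset.mem_univ, true_and] at hj ⊢
    obtain ⟨hjm, hle⟩ := hj
    have hjm2 : (j : ℕ) < m := by omega
    refine ⟨hjm, ?_⟩
    rw [insPerm_apply_lt _ _ _ hq, insPerm_apply_lt _ _ _ hjm2] at hle
    rwa [Fin.succAbove_le_succAbove_iff] at hle
  · intro j hj
    simp only [Finset.mem_filter, Finset.mem_univ, true_and] at hj ⊢
    obtain ⟨hjm, hle⟩ := hj
    have hjc : ((Fin.castSucc j : Fin (m + 1)) : ℕ) < m := by simp [j.2]
    refine ⟨by simpa using hjm, ?_⟩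
    rw [insPerm_apply_lt _ _ _ hq, insPerm_apply_lt _ _ _ hjc]
    rw [Fin.succAbove_le_succAbove_iff]
    have hj2 : (⟨((Fin.castSucc j : Fin (m + 1)) : ℕ), hjc⟩ : Fin m) = j := Fin.ext (by simp)
    rw [hj2]
    exact hle
  · intro j hj
    apply Fin.ext
    simp
  · intro j hj
    apply Fin.ext
    simp

lemma cnt_insPerm_top (τ : Equiv.Perm (Fin m)) (c : Fin (m + 1))
    (q : Fin (m + 1)) (hq : (q : ℕ) < m) :
    cnt q (m + 1) (vperm (insPerm τ c))
      = cnt (⟨(q : ℕ), hq⟩ : Fin m) m (vperm τ)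
        + (if ((τ ⟨(q : ℕ), hq⟩ : Fin m) : ℕ) < (c : ℕ) then 1 else 0) := by
  rw [cnt_vperm]
  rw [Finset.card_filter]
  rw [Fin.sum_univ_castSucc]
  have hlast : ((Fin.last m : Fin (m + 1)) : ℕ) < m + 1 := by simp
  have h1 : ∀ j : Fin m,
      (if ((Fin.castSucc j : Fin (m + 1)) : ℕ) < m + 1
          ∧ insPerm τ c q ≤ insPerm τ c (Fin.castSucc j) then 1 else 0)
        = (if τ ⟨(q : ℕ), hq⟩ ≤ τ j then 1 else 0) := by
    intro j
    have hjc : ((Fin.castSucc j : Fin (m + 1)) : ℕ) < m := by simp [j.2]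
    rw [insPerm_apply_lt _ _ _ hq, insPerm_apply_lt _ _ _ hjc]
    have : (⟨((Fin.castSucc j : Fin (m + 1)) : ℕ), hjc⟩ : Fin m) = j := by
      apply Fin.ext; simp
    rw [this]
    congr 1
    simp only [eq_iff_iff]
    constructor
    · rintro ⟨-, h⟩
      rwa [Fin.succAbove_le_succAbove_iff] at h
    · intro h
      exact ⟨by simp [j.2], by rwa [Fin.succAbove_le_succAbove_iff]⟩
  rw [Finset.sum_congr rfl fun j _ => h1 j]
  have h2 : (if ((Fin.last m : Fin (m + 1)) : ℕ) < m + 1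
      ∧ insPerm τ c q ≤ insPerm τ c (Fin.last m) then 1 else 0)
        = (if ((τ ⟨(q : ℕ), hq⟩ : Fin m) : ℕ) < (c : ℕ) then 1 else 0) := by
    rw [insPerm_apply_last, insPerm_apply_lt _ _ _ hq]
    congr 1
    simp only [eq_iff_iff]
    constructor
    · rintro ⟨-, h⟩
      rwa [succAbove_le_self_iff] at h
    · intro h
      exact ⟨by simp, by rwa [succAbove_le_self_iff]⟩
  rw [h2]
  congr 1
  rw [cnt_vperm, Finset.card_filter]
  refine Finset.sum_congr rfl fun j _ => ?_
  simp [j.2]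

lemma prod_shift (k : ℕ) (z : ℝ) :
    z * ∏ j ∈ Finset.range k, (z + 1 + (j : ℝ))
      = (z + k) * ∏ j ∈ Finset.range k, (z + (j : ℝ)) := by
  have h1 : ∏ j ∈ Finset.range (k + 1), (z + (j : ℝ))
      = (∏ j ∈ Finset.range k, (z + ((j + 1 : ℕ) : ℝ))) * (z + ((0 : ℕ) : ℝ)) :=
    Finset.prod_range_succ' (fun j => (z + (j : ℝ))) k
  have h2 : ∏ j ∈ Finset.range (k + 1), (z + (j : ℝ))
      = (∏ j ∈ Finset.range k, (z + (j : ℝ))) * (z + k) :=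
    Finset.prod_range_succ (fun j => (z + (j : ℝ))) k
  have h3 : (∏ j ∈ Finset.range k, (z + 1 + (j : ℝ)))
      = ∏ j ∈ Finset.range k, (z + ((j + 1 : ℕ) : ℝ)) := by
    refine Finset.prod_congr rfl fun j _ => by push_cast; ring
  rw [h3]
  have := h1.symm.trans h2
  push_cast at this ⊢
  nlinarith [this]

/-- The combinatorial core identity. -/
lemma CI (t r k : ℕ) (ht1 : 1 ≤ t) (htm : t ≤ m) :
    ((m : ℝ) + 1) * ∑ σ : Equiv.Perm (Fin (m + 1)),
        (∏ j ∈ Finset.range k, ((cnt (⟨t - 1, by omega⟩ : Fin (m + 1)) (m + 1) (vperm σ) : ℝ) + j))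
          * (if cnt (⟨t - 1, by omega⟩ : Fin (m + 1)) t (vperm σ) = r then (1 : ℝ) else 0)
      = ((m : ℝ) + 1 + k) * ∑ σ : Equiv.Perm (Fin (m + 1)),
        (∏ j ∈ Finset.range k, ((cnt (⟨t - 1, by omega⟩ : Fin (m + 1)) m (vperm σ) : ℝ) + j))
          * (if cnt (⟨t - 1, by omega⟩ : Fin (m + 1)) t (vperm σ) = r then (1 : ℝ) else 0) := by
  have ht1m : t - 1 < m := by omega
  set q : Fin (m + 1) := ⟨t - 1, by omega⟩ with hqdef
  have hqm : (q : ℕ) < m := ht1m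
  set q' : Fin m := ⟨t - 1, ht1m⟩ with hq'def
  have hq' : (⟨(q : ℕ), hqm⟩ : Fin m) = q' := rfl
  -- reindex both sums by the insertion bijection
  rw [← Fintype.sum_bijective (Φ (m := m)) Φ_bijective _ _ (fun p => rfl),
    ← Fintype.sum_bijective (Φ (m := m)) Φ_bijective _ _ (fun p => rfl)]
  rw [Fintype.sum_prod_type, Fintype.sum_prod_type]
  rw [Finset.mul_sum, Finset.mul_sum]
  refine Finset.sum_congr rfl fun τ _ => ?_
  -- abbreviations
  set a : ℕ := cnt q' m (vperm τ) with hadef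
  set ind : ℝ := (if cnt q' t (vperm τ) = r then (1 : ℝ) else 0) with hinddef
  have hafull : a = m - (τ q' : ℕ) := cnt_full τ q'
  have haval : (τ q' : ℕ) = m - a := by
    have := (τ q').2
    omega
  have ham : a ≤ m := by omega
  -- rewrite each inner sum
  have hrel : ∀ c : Fin (m + 1),
      cnt q t (vperm (Φ (τ, c))) = cnt q' t (vperm τ) := by
    intro c
    rw [show Φ (τ, c) = insPerm τ c from rfl]
    rw [cnt_insPerm_le τ c t (by omega) q hqm, hq']
  have hmid : ∀ c : Fin (m + 1),
      cnt q m (vperm (Φ (τ, c))) = a := by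
    intro c
    rw [show Φ (τ, c) = insPerm τ c from rfl]
    rw [cnt_insPerm_le τ c m le_rfl q hqm, hq']
  have htop : ∀ c : Fin (m + 1),
      cnt q (m + 1) (vperm (Φ (τ, c))) = a + (if ((τ q' : Fin m) : ℕ) < (c : ℕ) then 1 else 0) := by
    intro c
    rw [show Φ (τ, c) = insPerm τ c from rfl]
    rw [cnt_insPerm_top τ c q hqm, hq']
  -- RHS inner sum
  have hrhs : ∑ c : Fin (m + 1),
      (∏ j ∈ Finset.range k, ((cnt q m (vperm (Φ (τ, c))) : ℝ) + j))
        * (if cnt q t (vperm (Φ (τ, c))) = r then (1 : ℝ) else 0)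
      = ((m : ℝ) + 1) * ((∏ j ∈ Finset.range k, ((a : ℝ) + j)) * ind) := by
    rw [Finset.sum_congr rfl fun c _ => by rw [hmid c, hrel c]]
    rw [Finset.sum_const]
    simp only [Finset.card_univ, Fintype.card_fin, nsmul_eq_mul]
    push_cast
    ring
  -- LHS inner sum
  have hlhs : ∑ c : Fin (m + 1),
      (∏ j ∈ Finset.range k, ((cnt q (m + 1) (vperm (Φ (τ, c))) : ℝ) + j))
        * (if cnt q t (vperm (Φ (τ, c))) = r then (1 : ℝ) else 0)
      = (((m : ℝ) + 1 + k) * (∏ j ∈ Finset.range k, ((a : ℝ) + j))) * ind := by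
    rw [Finset.sum_congr rfl fun c _ => by rw [htop c, hrel c]]
    have hstep : ∀ c : Fin (m + 1),
        (∏ j ∈ Finset.range k,
            (((a + if ((τ q' : Fin m) : ℕ) < (c : ℕ) then 1 else 0 : ℕ) : ℝ) + j)) * ind
          = if ((τ q' : Fin m) : ℕ) < (c : ℕ)
            then (∏ j ∈ Finset.range k, (((a + 1 : ℕ) : ℝ) + j)) * ind
            else (∏ j ∈ Finset.range k, ((a : ℝ) + j)) * ind := by
      intro c
      split_ifs with h
      · norm_num
      · norm_num
    rw [Finset.sum_congr rfl fun c _ => hstep c]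
    rw [Finset.sum_ite, Finset.sum_const, Finset.sum_const]
    have hcard1 : (Finset.univ.filter fun c : Fin (m + 1) =>
        ((τ q' : Fin m) : ℕ) < (c : ℕ)).card = a := by
      have hset : (Finset.univ.filter fun c : Fin (m + 1) =>
          ((τ q' : Fin m) : ℕ) < (c : ℕ)) = Finset.Ioi (Fin.castSucc (τ q')) := by
        ext c
        simp [Finset.mem_Ioi, Fin.lt_def]
      rw [hset, Fin.card_Ioi]
      simp only [Fin.coe_castSucc]
      omega
    have hcard2 : (Finset.univ.filter fun c : Fin (m + 1) =>
        ¬ ((τ q' : Fin m) : ℕ) < (c : ℕ)).card = m + 1 - a := by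
      have := Finset.card_filter_add_card_filter_not
        (s := (Finset.univ : Finset (Fin (m + 1))))
        (p := fun c : Fin (m + 1) => ((τ q' : Fin m) : ℕ) < (c : ℕ))
      rw [hcard1] at this
      simp only [Finset.card_univ, Fintype.card_fin] at this
      omega
    rw [hcard1, hcard2]
    have hps := prod_shift k (a : ℝ)
    have hc1 : ((a + 1 : ℕ) : ℝ) = (a : ℝ) + 1 := by push_cast; ring
    simp only [nsmul_eq_mul, hc1]
    have hc2 : ((m + 1 - a : ℕ) : ℝ) = (m : ℝ) + 1 - (a : ℝ) := by
      push_cast [Nat.cast_sub (by omega : a ≤ m + 1)]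
      ring
    rw [hc2]
    have hprodeq : ∀ j : ℕ, ((a : ℝ) + 1 + (j : ℝ)) = ((a : ℝ) + 1 + (j : ℝ)) := fun _ => rfl
    linear_combination ind * hps
  rw [hrhs, hlhs]
  ring


end Stmt13Aux

namespace Stmt13Aux

variable {Ω : Type*} [MeasurableSpace Ω]

lemma E_eq (μ : Measure Ω) [IsProbabilityMeasure μ]
    (n : ℕ) (X : ℕ → Ω → ℝ) (hX : IIDContinuousOn X (Set.Icc 1 n) μ)
    (t : ℕ) (ht1 : 1 ≤ t) (N : ℕ) (htN : t ≤ N) (hNn : N ≤ n)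
    (m' : ℕ) (hm' : m' ≤ N) (r k : ℕ) :
    ∫ ω, (∏ j ∈ Finset.range k, ((absRank X t m' ω : ℝ) + (j : ℝ)))
        * (if relRank X t ω = r then (1 : ℝ) else 0) ∂μ
      = (N.factorial : ℝ)⁻¹ * ∑ σ : Equiv.Perm (Fin N),
        (∏ j ∈ Finset.range k,
            ((cnt (⟨t - 1, by omega⟩ : Fin N) m' (vperm σ) : ℝ) + (j : ℝ)))
          * (if cnt (⟨t - 1, by omega⟩ : Fin N) t (vperm σ) = r then (1 : ℝ) else 0) := by
  have hN1 : 1 ≤ N := ht1.trans htN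
  set q : Fin N := ⟨t - 1, by omega⟩ with hq
  set F : (Fin N → ℝ) → ℝ := fun x =>
    (∏ j ∈ Finset.range k, ((cnt q m' x : ℝ) + (j : ℝ)))
      * (if cnt q t x = r then (1 : ℝ) else 0) with hF
  have hFm : Measurable F := by
    refine Measurable.mul ?_ ?_
    · refine Finset.measurable_prod _ fun j _ => ?_
      exact (measurable_from_top.comp (measurable_cnt q m')).add measurable_const
    · exact Measurable.ite ((measurable_cnt q t) (measurableSet_singleton r))
        measurable_const measurable_const
  have hCb : ∀ x, |F x| ≤ ∏ j ∈ Finset.range k, ((N : ℝ) + (j : ℝ)) := by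
    intro x
    rw [hF]
    simp only
    rw [abs_mul]
    have h1 : |∏ j ∈ Finset.range k, ((cnt q m' x : ℝ) + (j : ℝ))|
        = ∏ j ∈ Finset.range k, ((cnt q m' x : ℝ) + (j : ℝ)) := by
      rw [abs_of_nonneg]
      exact Finset.prod_nonneg fun j _ => by positivity
    rw [h1]
    have h2 : |if cnt q t x = r then (1 : ℝ) else 0| ≤ 1 := by
      split_ifs <;> simp
    calc (∏ j ∈ Finset.range k, ((cnt q m' x : ℝ) + (j : ℝ)))
          * |if cnt q t x = r then (1 : ℝ) else 0|
        ≤ (∏ j ∈ Finset.range k, ((cnt q m' x : ℝ) + (j : ℝ))) * 1 := by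
          refine mul_le_mul_of_nonneg_left h2 ?_
          exact Finset.prod_nonneg fun j _ => by positivity
      _ ≤ ∏ j ∈ Finset.range k, ((N : ℝ) + (j : ℝ)) := by
          rw [mul_one]
          refine Finset.prod_le_prod (fun j _ => by positivity) fun j _ => ?_
          have := cnt_le q m' x
          have : (cnt q m' x : ℝ) ≤ (N : ℝ) := by exact_mod_cast this
          linarith
  have hFc : ∀ x y : Fin N → ℝ, (∀ i j, x i ≤ x j ↔ y i ≤ y j) → F x = F y := by
    intro x y h
    rw [hF]
    simp only
    rw [cnt_congr q m' h, cnt_congr q t h]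
  have := transfer μ n X hX N hN1 hNn F hFm _ hCb hFc
  rw [← this]
  refine integral_congr_ae (Filter.Eventually.of_forall fun ω => ?_)
  rw [hF]
  simp only
  rw [← absRank_eq_cnt X t m' N hm' ht1 htN ω, ← absRank_eq_cnt X t t N htN ht1 htN ω]
  rfl

end Stmt13Aux

/-- conditional factorial moments of the absolute rank:
`E[A_{t,n}(A_{t,n}+1)⋯(A_{t,n}+k−1) | R_t = r]
  = [(n+1)⋯(n+k)/((t+1)⋯(t+k))] · r(r+1)⋯(r+k−1)`. -/
theorem stmt_13 {Ω : Type*} [MeasurableSpace Ω] (μ : Measure Ω) [IsProbabilityMeasure μ]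
    (n : ℕ) (X : ℕ → Ω → ℝ) (hX : IIDContinuousOn X (Set.Icc 1 n) μ)
    (t : ℕ) (ht1 : 1 ≤ t) (htn : t ≤ n)
    (r : ℕ) (hr : r ∈ Set.Icc 1 t)
    (k : ℕ) (hk : 1 ≤ k) :
    ∫ ω, (∏ j ∈ Finset.range k, ((absRank X t n ω : ℝ) + (j : ℝ)))
        ∂(μ[|{ω | relRank X t ω = r}])
      = ((∏ j ∈ Finset.range k, ((n : ℝ) + 1 + (j : ℝ)))
          / (∏ j ∈ Finset.range k, ((t : ℝ) + 1 + (j : ℝ))))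
        * ∏ j ∈ Finset.range k, ((r : ℝ) + (j : ℝ)) := by
  classical
  open Stmt13Aux in
  obtain ⟨hr1, hrt⟩ := hr
  have hmeasX := hX.1
  set S := {ω | relRank X t ω = r} with hSdef
  have hmrel : Measurable (relRank X t) := by
    unfold relRank absRank
    simp_rw [Finset.card_filter]
    refine Finset.measurable_sum _ fun j hj => ?_
    simp only [Finset.mem_Icc] at hj
    exact Measurable.ite
      (measurableSet_le (hmeasX t ⟨ht1, htn⟩) (hmeasX j ⟨hj.1, hj.2.trans htn⟩))
      measurable_const measurable_const
  have hS : MeasurableSet S := hmrel (measurableSet_singleton r)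
  set E : ℕ → ℝ := fun m' =>
    ∫ ω, (∏ j ∈ Finset.range k, ((absRank X t m' ω : ℝ) + (j : ℝ)))
      * (if relRank X t ω = r then (1 : ℝ) else 0) ∂μ with hEdef
  set K : ℝ := (∏ j ∈ Finset.range k, ((r : ℝ) + (j : ℝ))) * (μ S).toReal with hKdef
  -- base case
  have hbase : E t = K := by
    rw [hEdef]
    simp only
    have hfun : (fun ω => (∏ j ∈ Finset.range k, ((absRank X t t ω : ℝ) + (j : ℝ)))
        * (if relRank X t ω = r then (1 : ℝ) else 0))
        = S.indicator (fun _ => ∏ j ∈ Finset.range k, ((r : ℝ) + (j : ℝ))) := by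
      funext ω
      rw [Set.indicator_apply]
      by_cases h : relRank X t ω = r
      · have hmem : ω ∈ S := h
        rw [if_pos hmem, if_pos h]
        have : absRank X t t ω = r := h
        rw [this, mul_one]
      · have hmem : ω ∉ S := h
        rw [if_neg hmem, if_neg h, mul_zero]
    rw [hfun, integral_indicator_const _ hS, hKdef]
    rw [smul_eq_mul]
    rw [measureReal_def]
    ring
  -- inductive step
  have hstep : ∀ m, t ≤ m → m + 1 ≤ n →
      ((m : ℝ) + 1) * E (m + 1) = ((m : ℝ) + 1 + (k : ℝ)) * E m := by
    intro m htm hm1n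
    have h1 := E_eq μ n X hX t ht1 (m + 1) (by omega) hm1n (m + 1) le_rfl r k
    have h2 := E_eq μ n X hX t ht1 (m + 1) (by omega) hm1n m (by omega) r k
    rw [hEdef]
    simp only
    rw [h1, h2]
    have hci := CI (m := m) t r k ht1 htm
    rw [mul_left_comm, hci, mul_left_comm]
  -- induction
  have hind : ∀ m, t ≤ m → m ≤ n →
      (∏ j ∈ Finset.range k, ((t : ℝ) + 1 + (j : ℝ))) * E m
        = (∏ j ∈ Finset.range k, ((m : ℝ) + 1 + (j : ℝ))) * K := by
    intro m htm
    induction m, htm using Nat.le_induction with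
    | base =>
      intro _
      rw [hbase]
    | succ m htm ih =>
      intro hm1n
      have h1 := ih (by omega)
      have h2 := hstep m htm hm1n
      have hm1 : ((m : ℝ) + 1) ≠ 0 := by positivity
      apply mul_left_cancel₀ hm1
      have hps := prod_shift k ((m : ℝ) + 1)
      have hcast : ((m + 1 : ℕ) : ℝ) = (m : ℝ) + 1 := by push_cast; ring
      calc ((m : ℝ) + 1) * ((∏ j ∈ Finset.range k, ((t : ℝ) + 1 + (j : ℝ))) * E (m + 1))
          = (∏ j ∈ Finset.range k, ((t : ℝ) + 1 + (j : ℝ))) * (((m : ℝ) + 1) * E (m + 1)) := by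
            ring
        _ = (∏ j ∈ Finset.range k, ((t : ℝ) + 1 + (j : ℝ))) * (((m : ℝ) + 1 + (k : ℝ)) * E m) := by
            rw [h2]
        _ = ((m : ℝ) + 1 + (k : ℝ)) * ((∏ j ∈ Finset.range k, ((t : ℝ) + 1 + (j : ℝ))) * E m) := by
            ring
        _ = ((m : ℝ) + 1 + (k : ℝ)) * ((∏ j ∈ Finset.range k, ((m : ℝ) + 1 + (j : ℝ))) * K) := by
            rw [h1]
        _ = ((m : ℝ) + 1) * ((∏ j ∈ Finset.range k, (((m + 1 : ℕ) : ℝ) + 1 + (j : ℝ))) * K) := by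
            have hpr : ∏ j ∈ Finset.range k, (((m + 1 : ℕ) : ℝ) + 1 + (j : ℝ))
                = ∏ j ∈ Finset.range k, (((m : ℝ) + 1) + 1 + (j : ℝ)) := by
              refine Finset.prod_congr rfl fun j _ => by rw [hcast]
            rw [hpr]
            linear_combination (-K) * hps
  -- positivity of the conditioning event
  have hpos : 0 < (μ S).toReal := by
    have hint : (μ S).toReal = ∫ ω, (if relRank X t ω = r then (1 : ℝ) else 0) ∂μ := by
      have hfun : (fun ω => (if relRank X t ω = r then (1 : ℝ) else 0))
          = S.indicator (fun _ => (1 : ℝ)) := by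
        funext ω
        rw [Set.indicator_apply]
        by_cases h : relRank X t ω = r
        · rw [if_pos h, if_pos (show ω ∈ S from h)]
        · rw [if_neg h, if_neg (show ω ∉ S from h)]
      rw [hfun, integral_indicator_const _ hS, smul_eq_mul, mul_one, measureReal_def]
    set q0 : Fin t := ⟨t - 1, by omega⟩ with hq0
    set F0 : (Fin t → ℝ) → ℝ := fun x => if cnt q0 t x = r then (1 : ℝ) else 0 with hF0
    have hF0m : Measurable F0 :=
      Measurable.ite ((measurable_cnt q0 t) (measurableSet_singleton r))
        measurable_const measurable_const
    have hF0b : ∀ x, |F0 x| ≤ 1 := by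
      intro x; rw [hF0]; simp only; split_ifs <;> simp
    have hF0c : ∀ x y : Fin t → ℝ, (∀ i j, x i ≤ x j ↔ y i ≤ y j) → F0 x = F0 y := by
      intro x y h; rw [hF0]; simp only; rw [cnt_congr q0 t h]
    have htr := transfer μ n X hX t ht1 htn F0 hF0m 1 hF0b hF0c
    have hcongr : ∫ ω, F0 (fun i => X ((i : ℕ) + 1) ω) ∂μ
        = ∫ ω, (if relRank X t ω = r then (1 : ℝ) else 0) ∂μ := by
      refine integral_congr_ae (Filter.Eventually.of_forall fun ω => ?_)
      rw [hF0]
      simp only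
      rw [← absRank_eq_cnt X t t t le_rfl ht1 le_rfl ω]
      rfl
    rw [hint, ← hcongr, htr]
    have hfac : (0 : ℝ) < (t.factorial : ℝ)⁻¹ := by
      have : (0 : ℝ) < (t.factorial : ℝ) := by
        exact_mod_cast Nat.factorial_pos t
      positivity
    refine mul_pos hfac ?_
    -- the sum is at least 1 thanks to a well-chosen permutation
    set σ0 : Equiv.Perm (Fin t) := Equiv.swap q0 (⟨t - r, by omega⟩ : Fin t) with hσ0
    have hval : cnt q0 t (vperm σ0) = r := by
      rw [cnt_full σ0 q0]
      rw [hσ0, Equiv.swap_apply_left]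
      simp only [Fin.val_mk]
      omega
    have hterm : F0 (vperm σ0) = 1 := by
      rw [hF0]; simp only; rw [if_pos hval]
    calc (0 : ℝ) < 1 := one_pos
      _ = F0 (vperm σ0) := hterm.symm
      _ ≤ ∑ σ : Equiv.Perm (Fin t), F0 (vperm σ) := by
          refine Finset.single_le_sum
            (f := fun σ : Equiv.Perm (Fin t) => F0 (vperm σ))
            (fun σ _ => ?_) (Finset.mem_univ σ0)
          rw [hF0]; simp only; split_ifs <;> simp
  have hμS0 : (μ S).toReal ≠ 0 := ne_of_gt hpos
  have hn' := hind n htn le_rfl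
  -- unfold the conditional measure
  rw [ProbabilityTheory.cond]
  rw [integral_smul_measure]
  have hres : ∫ ω, (∏ j ∈ Finset.range k, ((absRank X t n ω : ℝ) + (j : ℝ)))
      ∂(μ.restrict S) = E n := by
    rw [← integral_indicator hS]
    rw [hEdef]
    simp only
    refine integral_congr_ae (Filter.Eventually.of_forall fun ω => ?_)
    by_cases h : relRank X t ω = r <;>
      simp [S, Set.indicator_apply, Set.mem_setOf_eq, h]
  rw [hres, ENNReal.toReal_inv, smul_eq_mul]
  have hden : (∏ j ∈ Finset.range k, ((t : ℝ) + 1 + (j : ℝ))) ≠ 0 := by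
    refine ne_of_gt (Finset.prod_pos fun j _ => by positivity)
  rw [hKdef] at hn'
  field_simp
  linear_combination (∏ j ∈ Finset.range k, ((r : ℝ) + (j : ℝ)))⁻¹ * 0 + hn' * 1
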